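/- Let 𝒢 be a groupoid and β a normalized U(1)-valued 2-cocycle on 𝒢. Then the transgression t(β), defined on morphisms of the loop groupoid Λ𝒢 by t(β)(g → h) := β(h, h⁻¹gh) · β(g,h)⁻¹ for g ∈ End_𝒢(X) and h : X → Y, is a normalized groupoid 1-cocycle on Λ𝒢: t(β)(g → h) · t(β)(h⁻¹gh → h') = t(β)(g → hh') for every g ∈ End_𝒢(X) and composable h : X → Y, h' : Y → Z, and t(β)(g → id_X) = 1. -/

import Mathlib

open CategoryTheory

/-- A normalized `U(1)`-valued 2-cocycle on a groupoid `G`. -/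
structure TwoCocycle (G : Type) [Groupoid.{0} G] : Type where
  toFun : ∀ {X Y Z : G}, (X ⟶ Y) → (Y ⟶ Z) → ℂ
  abs_toFun : ∀ {X Y Z : G} (f : X ⟶ Y) (g : Y ⟶ Z), ‖toFun f g‖ = 1
  cocycle : ∀ {X Y Z W : G} (f : X ⟶ Y) (g : Y ⟶ Z) (h : Z ⟶ W),
    toFun g h * toFun f (g ≫ h) = toFun (f ≫ g) h * toFun f g
  id_left : ∀ {X Y : G} (g : X ⟶ Y), toFun (𝟙 X) g = 1
  id_right : ∀ {X Y : G} (g : X ⟶ Y), toFun g (𝟙 Y) = 1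

/-- Conjugation `h⁻¹ g h` of a loop `g ∈ End(X)` by a morphism `h : X ⟶ Y`. -/
def cnj {G : Type} [Groupoid.{0} G] {X Y : G} (g : X ⟶ X) (h : X ⟶ Y) : Y ⟶ Y :=
  Groupoid.inv h ≫ g ≫ h

/-- The `S¹`-transgression `t(β)(g → h) = β(h, h⁻¹gh) β(g,h)⁻¹` of a 2-cocycle `β`,
evaluated on the morphism `(g → h)` of the loop groupoid `Λ𝒢`. -/
noncomputable def tBeta {G : Type} [Groupoid.{0} G] (β : TwoCocycle G)
    {X Y : G} (g : X ⟶ X) (h : X ⟶ Y) : ℂ :=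
  β.toFun h (cnj g h) * (β.toFun g h)⁻¹

/-- The transgression `t(β)` of a normalized 2-cocycle `β` on a groupoid
`𝒢` is a normalized 1-cocycle on the loop groupoid `Λ𝒢`. -/
theorem tBeta_oneCocycle
    (G : Type) [Groupoid.{0} G] (β : TwoCocycle G) :
    (∀ (X Y Z : G) (g : X ⟶ X) (h : X ⟶ Y) (h' : Y ⟶ Z),
      tBeta β g h * tBeta β (cnj g h) h' = tBeta β g (h ≫ h')) ∧
    (∀ (X : G) (g : X ⟶ X), tBeta β g (𝟙 X) = 1) := by
  have hne : ∀ {X Y Z : G} (f : X ⟶ Y) (g : Y ⟶ Z), β.toFun f g ≠ 0 := by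
    intro X Y Z f g h0
    have := β.abs_toFun f g
    rw [h0] at this
    simp at this
  constructor
  · intro X Y Z g h h'
    set k := cnj g h with hk
    set m := cnj g (h ≫ h') with hm
    have hconj : g ≫ h = h ≫ k := by simp [hk, cnj]
    have hconj2 : k ≫ h' = h' ≫ m := by
      simp only [hk, hm, cnj, Groupoid.inv_comp, Category.assoc]
      simp
    have C1 := β.cocycle g h h'
    have C2 := β.cocycle h k h'
    have C3 := β.cocycle h h' m
    rw [← hconj] at C2
    rw [← hconj2] at C3
    set a := β.toFun h k
    set b := β.toFun g h
    set c := β.toFun h' m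
    set d := β.toFun k h'
    set e := β.toFun (h ≫ h') m
    set f := β.toFun g (h ≫ h')
    set p := β.toFun (g ≫ h) h'
    set q := β.toFun (h) (k ≫ h')
    set r := β.toFun h h'
    -- C1 : r * f = p * b ; C2 : d * q = p * a ; C3 : c * q = e * r
    have key : q * r * (a * c * f) = q * r * (b * d * e) := by
      linear_combination (a * f * r) * C3 + (a * e * r) * C1 - (b * e * r) * C2
    have key2 : a * c * f = b * d * e :=
      mul_left_cancel₀ (mul_ne_zero (hne _ _) (hne _ _)) key
    have hcnj : cnj k h' = m := by
      simp only [hk, hm, cnj, Groupoid.inv_comp, Category.assoc]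
      simp
    simp only [tBeta, hcnj]
    show a * b⁻¹ * (c * d⁻¹) = e * f⁻¹
    have hb : b ≠ 0 := hne g h
    have hd : d ≠ 0 := hne k h'
    have hf : f ≠ 0 := hne g (h ≫ h')
    clear_value a b c d e f
    field_simp
    linear_combination key2
  · intro X g
    simp [tBeta, cnj, β.id_left, β.id_right]
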